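/- Let n ≥ 1 be an integer and let 0 < λ ≤ n. Let a_1, …, a_n be i.i.d. Bernoulli random variables with P(a_j = 1) = λ/n and P(a_j = 0) = 1 − λ/n, and let W_1, …, W_n be i.i.d. real random variables, independent of (a_1, …, a_n), with E|W_j|^i < ∞ and E W_j^i = V_i ≥ 0 for every i ≥ 1. Then for every integer k with 1 ≤ k ≤ n, (1 − k²/(2n)) · M_k(λ) ≤ E[(Σ_{j=1}^n a_j W_j)^k] ≤ M_k(λ); in particular E[(Σ_{j=1}^n a_j W_j)^k] = M_k(λ)·(1 + O(k²/n)) uniformly in λ. -/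

import Mathlib

open scoped BigOperators ENNReal
open Filter MeasureTheory
open Finset ProbabilityTheory

noncomputable section

/-- The finset of tuples `(l 0, ..., l (k-1))` (representing `l_1, ..., l_k`) of nonnegative
integers with `l_1 + 2 l_2 + ⋯ + k l_k = k`. -/
def bellTuples (k : ℕ) : Finset (Fin k → ℕ) :=
  (Fintype.piFinset fun _ => Finset.range (k + 1)).filter
    (fun l => ∑ i, (i.1 + 1) * l i = k)

/-- Weighted Bell polynomial `M_k(x)` for weights `V_1, V_2, …`. -/
def weightedBell (V : ℕ → ℝ) (k : ℕ) (x : ℝ) : ℝ :=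
  (Nat.factorial k : ℝ) * ∑ l ∈ bellTuples k, ∏ i : Fin k,
    (x * V (i.1 + 1)) ^ (l i) /
      ((Nat.factorial (i.1 + 1) : ℝ) ^ (l i) * (Nat.factorial (l i) : ℝ))

/-- Exponential generating function `H(u) = 1 + ∑_{i ≥ 1} V_i u^i / i!` of the weights. -/
def weightEGF (V : ℕ → ℝ) (u : ℝ) : ℝ :=
  1 + ∑' i : ℕ, V (i + 1) * u ^ (i + 1) / (Nat.factorial (i + 1) : ℝ)

/-- Termwise derivative `H'(u) = ∑_{i ≥ 1} V_i u^{i-1}/(i-1)!`. -/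
def weightEGFDeriv (V : ℕ → ℝ) (u : ℝ) : ℝ :=
  ∑' i : ℕ, V (i + 1) * u ^ i / (Nat.factorial i : ℝ)

/-- Termwise second derivative `H''(u)`. -/
def weightEGFDeriv2 (V : ℕ → ℝ) (u : ℝ) : ℝ :=
  ∑' i : ℕ, V (i + 2) * u ^ i / (Nat.factorial i : ℝ)

/-- `H(u) < ∞` for all `u ∈ [0, u_0)`. -/
def HFinite (V : ℕ → ℝ) (u0 : ℝ≥0∞) : Prop :=
  ∀ u : ℝ, 0 ≤ u → ENNReal.ofReal u < u0 →
    Summable (fun i : ℕ => V (i + 1) * u ^ (i + 1) / (Nat.factorial (i + 1) : ℝ))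

lemma prod_indep {ι : Type*} [DecidableEq ι] {Ω : Type*} [MeasurableSpace Ω] {μ : Measure Ω}
    [IsProbabilityMeasure μ] (f : ι → Ω → ℝ) (hmeas : ∀ i, Measurable (f i))
    (hindep : iIndepFun f μ)
    (hint : ∀ i, Integrable (f i) μ) (s : Finset ι) :
    Integrable (fun ω => ∏ i ∈ s, f i ω) μ ∧
      ∫ ω, ∏ i ∈ s, f i ω ∂μ = ∏ i ∈ s, ∫ ω, f i ω ∂μ := by
  classical
  induction s using Finset.induction with
  | empty => simp
  | @insert a s ha ih =>
    have hIF : IndepFun (∏ j ∈ s, f j) (f a) μ :=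
      hindep.indepFun_finsetProd_of_notMem hmeas ha
    have hps : (fun ω => ∏ i ∈ s, f i ω) = ∏ j ∈ s, f j := by
      funext ω; simp [Finset.prod_apply]
    have hint2 : Integrable ((∏ j ∈ s, f j) * f a) μ := by
      exact (hIF.integrable_mul (hps ▸ ih.1) (hint a))
    constructor
    · have : (fun ω => ∏ i ∈ insert a s, f i ω) = (∏ j ∈ s, f j) * f a := by
        funext ω; simp [Finset.prod_insert ha, Finset.prod_apply, mul_comm]
      rw [this]; exact hint2
    · have h1 : ∫ ω, ∏ i ∈ insert a s, f i ω ∂μ = ∫ ω, ((∏ j ∈ s, f j) * f a) ω ∂μ := by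
        congr 1; funext ω; simp [Finset.prod_insert ha, Finset.prod_apply, mul_comm]
      rw [h1, hIF.integral_mul_eq_mul_integral (hps ▸ ih.1).aestronglyMeasurable (hint a).aestronglyMeasurable]
      rw [Finset.prod_insert ha, ← ih.2]
      have : ∫ ω, (∏ j ∈ s, f j) ω ∂μ = ∫ ω, ∏ i ∈ s, f i ω ∂μ := by
        congr 1; funext ω; simp [Finset.prod_apply]
      rw [this]; ring

lemma moment_formula
    {Ω : Type*} [MeasurableSpace Ω] (μ : Measure Ω) [IsProbabilityMeasure μ]
    (n : ℕ) (hn : 1 ≤ n) (lam : ℝ) (hlam : 0 < lam)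
    (a W : Fin n → Ω → ℝ) (V : ℕ → ℝ)
    (hameas : ∀ j, Measurable (a j)) (hWmeas : ∀ j, Measurable (W j))
    (ha01 : ∀ j ω, a j ω = 0 ∨ a j ω = 1)
    (haP : ∀ j, μ {ω | a j ω = 1} = ENNReal.ofReal (lam / n))
    (hindep : ProbabilityTheory.iIndepFun
      (Sum.elim a W) μ)
    (hWint : ∀ j, ∀ i : ℕ, 1 ≤ i → Integrable (fun ω => |W j ω| ^ i) μ)
    (hWmom : ∀ j, ∀ i : ℕ, 1 ≤ i → ∫ ω, (W j ω) ^ i ∂μ = V i)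
    (k : ℕ) :
    ∫ ω, (∑ j, a j ω * W j ω) ^ k ∂μ =
      ∑ c ∈ Finset.piAntidiag (Finset.univ : Finset (Fin n)) k, (Nat.multinomial Finset.univ c : ℝ) *
        ∏ j, (if c j = 0 then (1:ℝ) else lam / n * V (c j)) := by
  classical
  have hln : (0:ℝ) ≤ lam / n := by positivity
  -- the family Y indexed by the sum type
  have key : ∀ c : Fin n → ℕ,
      (Integrable (fun ω => ∏ j, (a j ω * W j ω) ^ (c j)) μ) ∧
      ∫ ω, ∏ j, (a j ω * W j ω) ^ (c j) ∂μ =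
        ∏ j, (if c j = 0 then (1:ℝ) else lam / n * V (c j)) := by
    intro c
    set e : Fin n ⊕ Fin n → ℕ := Sum.elim c c with he
    set Y : Fin n ⊕ Fin n → Ω → ℝ := fun t ω => (Sum.elim a W t ω) ^ (e t) with hY
    have hYmeas : ∀ t, Measurable (Y t) := by
      rintro (j | j)
      · exact (hameas j).pow_const _
      · exact (hWmeas j).pow_const _
    have hYindep : iIndepFun Y μ :=
      hindep.comp (fun t x => x ^ e t) (fun t => measurable_id.pow_const _)
    have hYint : ∀ t, Integrable (Y t) μ := by
      rintro (j | j)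
      · refine (integrable_const (1:ℝ)).mono' (hYmeas (Sum.inl j)).aestronglyMeasurable ?_
        refine Filter.Eventually.of_forall fun ω => ?_
        simp only [hY, he, Sum.elim_inl]
        rcases ha01 j ω with h | h <;> rw [h]
        · by_cases h0 : c j = 0
          · simp [h0]
          · simp [zero_pow h0]
        · simp
      · by_cases h0 : c j = 0
        · have : Y (Sum.inr j) = fun _ => (1:ℝ) := by
            funext ω; simp [hY, he, h0]
          rw [this]; exact integrable_const 1
        · refine (hWint j (c j) (Nat.one_le_iff_ne_zero.mpr h0)).mono'
            (hYmeas (Sum.inr j)).aestronglyMeasurable ?_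
          refine Filter.Eventually.of_forall fun ω => ?_
          simp only [hY, he, Sum.elim_inr, Real.norm_eq_abs, abs_pow]
          exact le_refl _
    have hprod : ∀ ω, ∏ j, (a j ω * W j ω) ^ (c j) = ∏ t, Y t ω := by
      intro ω
      rw [Fintype.prod_sum_type]
      simp only [hY, he, Sum.elim_inl, Sum.elim_inr]
      rw [← Finset.prod_mul_distrib]
      exact Finset.prod_congr rfl fun j _ => (mul_pow _ _ _)
    have hPI := prod_indep Y hYmeas hYindep hYint Finset.univ
    have hYa : ∀ j, ∫ ω, Y (Sum.inl j) ω ∂μ = (if c j = 0 then (1:ℝ) else lam / n) := by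
      intro j
      by_cases h0 : c j = 0
      · simp [hY, he, h0]
      · have hpt : ∀ ω, Y (Sum.inl j) ω = a j ω := by
          intro ω
          rcases ha01 j ω with h | h <;>
            simp [hY, he, h, zero_pow h0]
        have hind : (fun ω => a j ω) = Set.indicator {ω | a j ω = 1} (fun _ => (1:ℝ)) := by
          funext ω
          rcases ha01 j ω with h | h <;> simp [Set.indicator, Set.mem_setOf_eq, h]
        have hms : MeasurableSet {ω | a j ω = 1} := hameas j (measurableSet_singleton 1)
        calc ∫ ω, Y (Sum.inl j) ω ∂μ = ∫ ω, a j ω ∂μ := by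
              congr 1; funext ω; exact hpt ω
          _ = (μ {ω | a j ω = 1}).toReal • (1:ℝ) := by
              rw [hind]; exact integral_indicator_const 1 hms
          _ = lam / n := by
              rw [haP j, ENNReal.toReal_ofReal hln, smul_eq_mul, mul_one]
        simp [h0]
    have hYw : ∀ j, ∫ ω, Y (Sum.inr j) ω ∂μ = (if c j = 0 then (1:ℝ) else V (c j)) := by
      intro j
      by_cases h0 : c j = 0
      · simp [hY, he, h0]
      · simp only [hY, he, Sum.elim_inr, h0, if_false]
        exact hWmom j (c j) (Nat.one_le_iff_ne_zero.mpr h0)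
    constructor
    · have : (fun ω => ∏ j, (a j ω * W j ω) ^ (c j)) = fun ω => ∏ t, Y t ω := by
        funext ω; exact hprod ω
      rw [this]; exact hPI.1
    · calc ∫ ω, ∏ j, (a j ω * W j ω) ^ (c j) ∂μ = ∫ ω, ∏ t, Y t ω ∂μ := by
            congr 1; funext ω; exact hprod ω
        _ = ∏ t, ∫ ω, Y t ω ∂μ := hPI.2
        _ = (∏ j, ∫ ω, Y (Sum.inl j) ω ∂μ) * ∏ j, ∫ ω, Y (Sum.inr j) ω ∂μ :=
            Fintype.prod_sum_type _
        _ = ∏ j, (if c j = 0 then (1:ℝ) else lam / n * V (c j)) := by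
            rw [← Finset.prod_mul_distrib]
            refine Finset.prod_congr rfl fun j _ => ?_
            rw [hYa j, hYw j]
            by_cases h0 : c j = 0 <;> simp [h0]
  have hpt : ∀ ω : Ω, (∑ j, a j ω * W j ω) ^ k =
      ∑ c ∈ Finset.piAntidiag (Finset.univ : Finset (Fin n)) k, (Nat.multinomial Finset.univ c : ℝ) *
        ∏ j, (a j ω * W j ω) ^ (c j) := fun ω =>
    Finset.sum_pow_eq_sum_piAntidiag Finset.univ _ k
  calc ∫ ω, (∑ j, a j ω * W j ω) ^ k ∂μ
      = ∫ ω, ∑ c ∈ Finset.piAntidiag (Finset.univ : Finset (Fin n)) k, (Nat.multinomial Finset.univ c : ℝ) *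
          ∏ j, (a j ω * W j ω) ^ (c j) ∂μ := by
        congr 1; funext ω; exact hpt ω
    _ = ∑ c ∈ Finset.piAntidiag (Finset.univ : Finset (Fin n)) k, ∫ ω, (Nat.multinomial Finset.univ c : ℝ) *
          ∏ j, (a j ω * W j ω) ^ (c j) ∂μ := by
        refine integral_finset_sum _ fun c _ => ((key c).1.const_mul _)
    _ = ∑ c ∈ Finset.piAntidiag (Finset.univ : Finset (Fin n)) k, (Nat.multinomial Finset.univ c : ℝ) *
          ∏ j, (if c j = 0 then (1:ℝ) else lam / n * V (c j)) := by
        refine Finset.sum_congr rfl fun c _ => ?_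
        rw [MeasureTheory.integral_const_mul, (key c).2]

def famSet {α : Type*} [DecidableEq α] (k : ℕ) (s : Finset α) (l : Fin k → ℕ) :
    Finset (Fin k → Finset α) :=
  (Fintype.piFinset fun _ => s.powerset).filter
    (fun A => (∀ i, (A i).card = l i) ∧ ∀ i i', i ≠ i' → ∀ x ∈ A i, x ∉ A i')

lemma famSet_card {α : Type*} [DecidableEq α] :
    ∀ (k : ℕ) (s : Finset α) (l : Fin k → ℕ), (∑ i, l i) ≤ s.card →
    (famSet k s l).card * ((∏ i, Nat.factorial (l i)) * Nat.factorial (s.card - ∑ i, l i)) =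
      Nat.factorial s.card := by
  intro k
  induction k with
  | zero =>
    intro s l _
    have h1 : famSet 0 s l = Fintype.piFinset (fun _ : Fin 0 => s.powerset) := by
      rw [famSet, Finset.filter_true_of_mem]
      intro A _
      exact ⟨fun i => i.elim0, fun i => i.elim0⟩
    simp [h1, Fintype.card_piFinset]
  | succ k ih =>
    intro s l hle
    have hl0 : l 0 ≤ s.card :=
      le_trans (Finset.single_le_sum (f := l) (fun i _ => Nat.zero_le _) (Finset.mem_univ 0)) hle
    set S2 := ∑ i : Fin k, l (Fin.succ i) with hS2
    set M := ∑ i : Fin (k+1), l i with hM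
    have hsum : M = l 0 + S2 := Fin.sum_univ_succ l
    have htail : ∑ i, Fin.tail l i = S2 := rfl
    clear_value S2 M
    clear hS2 hM
    have hcard : (famSet (k+1) s l).card =
        ∑ B ∈ s.powersetCard (l 0), ((famSet (k+1) s l).filter (fun A => A 0 = B)).card := by
      apply Finset.card_eq_sum_card_fiberwise
      intro A hA
      rw [Finset.mem_coe, Finset.mem_powersetCard]
      obtain ⟨hA1, hA2⟩ := Finset.mem_filter.mp hA
      exact ⟨Finset.mem_powerset.mp (Fintype.mem_piFinset.mp hA1 0), hA2.1 0⟩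
    have hfiber : ∀ B ∈ s.powersetCard (l 0),
        ((famSet (k+1) s l).filter (fun A => A 0 = B)).card =
          (famSet k (s \ B) (Fin.tail l)).card := by
      intro B hB
      obtain ⟨hBs, hBc⟩ := Finset.mem_powersetCard.mp hB
      apply Finset.card_nbij' (fun A => Fin.tail A) (fun A' => Fin.cons B A')
      · -- forward maps into famSet k (s \ B) (tail l)
        intro A hA
        obtain ⟨hA1, hA0⟩ := Finset.mem_filter.mp hA
        obtain ⟨hApi, hAc, hAd⟩ := Finset.mem_filter.mp hA1
        refine Finset.mem_filter.mpr ⟨Fintype.mem_piFinset.mpr fun i => ?_, fun i => hAc i.succ,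
          fun i i' hii' x hx => hAd i.succ i'.succ (by simpa using hii') x hx⟩
        rw [Finset.mem_powerset]
        intro x hx
        rw [Finset.mem_sdiff]
        refine ⟨Finset.mem_powerset.mp (Fintype.mem_piFinset.mp hApi i.succ) hx, ?_⟩
        rw [← hA0]
        exact hAd i.succ 0 (Fin.succ_ne_zero i) x hx
      · -- backward maps into fiber
        intro A' hA'
        obtain ⟨hApi, hAc, hAd⟩ := Finset.mem_filter.mp hA'
        refine Finset.mem_filter.mpr ⟨Finset.mem_filter.mpr ⟨Fintype.mem_piFinset.mpr fun i => ?_,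
          fun i => ?_, fun i i' hii' x hx => ?_⟩, rfl⟩
        · rw [Finset.mem_powerset]
          refine Fin.cases ?_ (fun i => ?_) i
          · simpa using hBs
          · simp only [Fin.cons_succ]
            exact le_trans (Finset.mem_powerset.mp (Fintype.mem_piFinset.mp hApi i))
              (Finset.sdiff_subset)
        · refine Fin.cases ?_ (fun i => ?_) i
          · simpa using hBc
          · simpa [Fin.tail] using hAc i
        · have hdisj : ∀ (i0 : Fin k) (y : α), y ∈ A' i0 → y ∉ B := fun i0 y hy hyB =>
            (Finset.mem_sdiff.mp
              (Finset.mem_powerset.mp (Fintype.mem_piFinset.mp hApi i0) hy)).2 hyB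
          rcases Fin.eq_zero_or_eq_succ i with rfl | ⟨i0, rfl⟩ <;>
            rcases Fin.eq_zero_or_eq_succ i' with rfl | ⟨i1, rfl⟩
          · exact absurd rfl hii'
          · simp only [Fin.cons_zero] at hx
            simp only [Fin.cons_succ]
            exact fun hx' => hdisj i1 x hx' hx
          · simp only [Fin.cons_succ] at hx
            simp only [Fin.cons_zero]
            exact hdisj i0 x hx
          · simp only [Fin.cons_succ] at hx ⊢
            exact hAd i0 i1 (fun h => hii' (by rw [h])) x hx
      · intro A hA
        rw [← (Finset.mem_filter.mp hA).2]; exact Fin.cons_self_tail A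
      · intro A' _
        rfl
    have hIH : ∀ B ∈ s.powersetCard (l 0),
        (famSet k (s \ B) (Fin.tail l)).card *
          ((∏ i, Nat.factorial (Fin.tail l i)) * Nat.factorial (s.card - M)) =
          Nat.factorial (s.card - l 0) := by
      intro B hB
      obtain ⟨hBs, hBc⟩ := Finset.mem_powersetCard.mp hB
      have hc : (s \ B).card = s.card - l 0 := by rw [Finset.card_sdiff_of_subset hBs, hBc]
      have hle' : (∑ i, Fin.tail l i) ≤ (s \ B).card := by
        rw [hc, htail]
        exact Nat.le_sub_of_add_le (by rw [Nat.add_comm, ← hsum]; exact hle)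
      have := ih (s \ B) (Fin.tail l) hle'
      rw [hc] at this
      rw [← this]
      congr 2
      rw [htail, hsum, Nat.sub_sub]
    -- combine
    have hmain : (famSet (k+1) s l).card *
        ((∏ i, Nat.factorial (Fin.tail l i)) * Nat.factorial (s.card - M)) =
        Nat.choose s.card (l 0) * Nat.factorial (s.card - l 0) := by
      rw [hcard, Finset.sum_mul]
      rw [Finset.sum_congr rfl (fun B hB => by rw [hfiber B hB, hIH B hB])]
      rw [Finset.sum_const, Finset.card_powersetCard, smul_eq_mul]
    have hfac : ∏ i, Nat.factorial (l i) = Nat.factorial (l 0) * ∏ i, Nat.factorial (Fin.tail l i) :=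
      Fin.prod_univ_succ _
    calc (famSet (k+1) s l).card * ((∏ i, Nat.factorial (l i)) * Nat.factorial (s.card - M))
        = Nat.factorial (l 0) * ((famSet (k+1) s l).card *
            ((∏ i, Nat.factorial (Fin.tail l i)) * Nat.factorial (s.card - M))) := by
          rw [hfac]; ring
      _ = Nat.factorial (l 0) * (Nat.choose s.card (l 0) * Nat.factorial (s.card - l 0)) := by
          rw [hmain]
      _ = Nat.factorial s.card := by
          rw [← Nat.choose_mul_factorial_mul_factorial hl0]; ring

lemma mem_famSet {α : Type*} [DecidableEq α] {k : ℕ} {s : Finset α} {l : Fin k → ℕ}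
    {A : Fin k → Finset α} : A ∈ famSet k s l ↔
      (∀ i, A i ⊆ s) ∧ (∀ i, (A i).card = l i) ∧
        ∀ i i', i ≠ i' → ∀ x ∈ A i, x ∉ A i' := by
  unfold famSet
  rw [Finset.mem_filter, Fintype.mem_piFinset]
  simp only [Finset.mem_powerset]

def typeOf (n k : ℕ) (c : Fin n → ℕ) : Fin k → ℕ :=
  fun i => (Finset.univ.filter (fun j : Fin n => c j = i.1 + 1)).card

lemma prod_by_type {M : Type*} [CommMonoid M] (h : ℕ → M) (h0 : h 0 = 1) (n k : ℕ)
    (c : Fin n → ℕ) (hc : ∀ j, c j ≤ k) :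
    ∏ j, h (c j) = ∏ i : Fin k, h (i.1 + 1) ^ (typeOf n k c i) := by
  classical
  have hmap : ∀ j ∈ (Finset.univ : Finset (Fin n)), c j ∈ Finset.range (k+1) :=
    fun j _ => Finset.mem_range.mpr (Nat.lt_succ_of_le (hc j))
  rw [← Finset.prod_fiberwise_of_maps_to hmap (fun j => h (c j))]
  have hfib : ∀ v, ∏ j ∈ Finset.univ.filter (fun j : Fin n => c j = v), h (c j) =
      h v ^ (Finset.univ.filter (fun j : Fin n => c j = v)).card := by
    intro v
    rw [Finset.prod_congr rfl (fun j hj => by rw [(Finset.mem_filter.mp hj).2]),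
      Finset.prod_const]
  rw [Finset.prod_congr rfl (fun v _ => hfib v), Finset.prod_range_succ', h0, one_pow, mul_one]
  exact (Fin.prod_univ_eq_prod_range (fun v => h (v + 1) ^
    (Finset.univ.filter (fun j : Fin n => c j = v + 1)).card) k).symm

lemma sum_by_type (n k : ℕ) (c : Fin n → ℕ) (hc : ∀ j, c j ≤ k) :
    ∑ j, c j = ∑ i : Fin k, (i.1 + 1) * (typeOf n k c i) := by
  classical
  have hmap : ∀ j ∈ (Finset.univ : Finset (Fin n)), c j ∈ Finset.range (k+1) :=
    fun j _ => Finset.mem_range.mpr (Nat.lt_succ_of_le (hc j))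
  rw [← Finset.sum_fiberwise_of_maps_to hmap (fun j => c j)]
  have hfib : ∀ v, ∑ j ∈ Finset.univ.filter (fun j : Fin n => c j = v), c j =
      v * (Finset.univ.filter (fun j : Fin n => c j = v)).card := by
    intro v
    rw [Finset.sum_congr rfl (fun j hj => (Finset.mem_filter.mp hj).2),
      Finset.sum_const, smul_eq_mul, mul_comm]
  rw [Finset.sum_congr rfl (fun v _ => hfib v), Finset.sum_range_succ', zero_mul, add_zero]
  exact (Fin.sum_univ_eq_sum_range (fun v => (v + 1) *
    (Finset.univ.filter (fun j : Fin n => c j = v + 1)).card) k).symm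

lemma mem_piAntidiag_le {n k : ℕ} {c : Fin n → ℕ}
    (hc : c ∈ Finset.piAntidiag (Finset.univ : Finset (Fin n)) k) : ∀ j, c j ≤ k := by
  obtain ⟨hsum, -⟩ := Finset.mem_piAntidiag.mp hc
  intro j
  rw [← hsum]
  exact Finset.single_le_sum (f := c) (fun i _ => Nat.zero_le _) (Finset.mem_univ j)

lemma typeOf_mem_bellTuples {n k : ℕ}
    {c : Fin n → ℕ} (hc : c ∈ Finset.piAntidiag (Finset.univ : Finset (Fin n)) k) :
    typeOf n k c ∈ bellTuples k := by
  obtain ⟨hsum, -⟩ := Finset.mem_piAntidiag.mp hc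
  have hck := mem_piAntidiag_le hc
  have hsum2 : ∑ i : Fin k, (i.1 + 1) * (typeOf n k c i) = k := by
    rw [← sum_by_type n k c hck]; exact hsum
  refine Finset.mem_filter.mpr ⟨Fintype.mem_piFinset.mpr fun i => ?_, hsum2⟩
  rw [Finset.mem_range, Nat.lt_succ_iff]
  calc typeOf n k c i ≤ (i.1 + 1) * (typeOf n k c i) := Nat.le_mul_of_pos_left _ (Nat.succ_pos _)
    _ ≤ ∑ i' : Fin k, (i'.1 + 1) * (typeOf n k c i') :=
        Finset.single_le_sum (f := fun i' : Fin k => (i'.1 + 1) * (typeOf n k c i'))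
          (fun i' _ => Nat.zero_le _) (Finset.mem_univ i)
    _ = k := hsum2

lemma fiber_card {n k : ℕ} (hkn : k ≤ n) {l : Fin k → ℕ} (hl : l ∈ bellTuples k) :
    ((Finset.piAntidiag (Finset.univ : Finset (Fin n)) k).filter
        (fun c => typeOf n k c = l)).card *
      ((∏ i, Nat.factorial (l i)) * Nat.factorial (n - ∑ i, l i)) = Nat.factorial n := by
  obtain ⟨-, hlsum⟩ := Finset.mem_filter.mp hl
  have hmk : ∑ i, l i ≤ k := by
    have h2 : ∑ i, l i ≤ ∑ i : Fin k, (i.1 + 1) * l i :=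
      Finset.sum_le_sum fun i _ => Nat.le_mul_of_pos_left _ (Nat.succ_pos _)
    exact le_trans h2 (le_of_eq hlsum)
  have hmn : ∑ i, l i ≤ n := le_trans hmk hkn
  -- the inverse map
  set G : (Fin k → Finset (Fin n)) → (Fin n → ℕ) :=
    fun A j => ∑ i, (i.1 + 1) * (if j ∈ A i then 1 else 0) with hG
  have hcardfun : ∀ (A : Fin k → Finset (Fin n)) (i : Fin k),
      (∑ j, if j ∈ A i then 1 else 0) = (A i).card := by
    intro A i
    rw [Finset.sum_ite_mem, Finset.univ_inter, Finset.sum_const, smul_eq_mul, mul_one]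
  have hval : ∀ (A : Fin k → Finset (Fin n)),
      (∀ i i', i ≠ i' → ∀ x ∈ A i, x ∉ A i') →
      ∀ (j : Fin n) (i : Fin k), j ∈ A i → G A j = i.1 + 1 := by
    intro A hdisj j i hj
    simp only [hG]
    rw [Finset.sum_eq_single i]
    · simp [hj]
    · intro i' _ hne
      have : j ∉ A i' := hdisj i i' hne.symm j hj
      simp [this]
    · intro h; exact absurd (Finset.mem_univ i) h
  have hval0 : ∀ (A : Fin k → Finset (Fin n)) (j : Fin n),
      (∀ i, j ∉ A i) → G A j = 0 := by
    intro A j hj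
    simp only [hG]
    exact Finset.sum_eq_zero fun i _ => by simp [hj i]
  have hfilterA : ∀ (A : Fin k → Finset (Fin n)), A ∈ famSet k (Finset.univ : Finset (Fin n)) l →
      ∀ i : Fin k, Finset.univ.filter (fun j : Fin n => G A j = i.1 + 1) = A i := by
    intro A hA i
    obtain ⟨-, hAc, hAd⟩ := mem_famSet.mp hA
    ext j
    simp only [Finset.mem_filter, Finset.mem_univ, true_and]
    constructor
    · intro hGj
      by_cases hex : ∃ i', j ∈ A i'
      · obtain ⟨i', hji'⟩ := hex
        have := hval A hAd j i' hji'
        rw [this] at hGj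
        have : i' = i := Fin.ext (by omega)
        exact this ▸ hji'
      · push_neg at hex
        rw [hval0 A j hex] at hGj
        omega
    · intro hj
      exact hval A hAd j i hj
  have hbij : ((Finset.piAntidiag (Finset.univ : Finset (Fin n)) k).filter
      (fun c => typeOf n k c = l)).card = (famSet k (Finset.univ : Finset (Fin n)) l).card := by
    set F : (Fin n → ℕ) → (Fin k → Finset (Fin n)) :=
      fun c i => Finset.univ.filter (fun j : Fin n => c j = i.1 + 1) with hF
    have hFmaps : ∀ c ∈ (Finset.piAntidiag (Finset.univ : Finset (Fin n)) k).filter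
        (fun c => typeOf n k c = l), F c ∈ famSet k (Finset.univ : Finset (Fin n)) l := by
      intro c hcmem
      obtain ⟨hc1, hc2⟩ := Finset.mem_filter.mp hcmem
      refine mem_famSet.mpr ⟨fun i => Finset.subset_univ _, fun i => congrFun hc2 i,
        fun i i' hne x hx hx' => ?_⟩
      simp only [hF, Finset.mem_filter] at hx hx'
      exact hne (Fin.ext (by omega))
    have hGmaps : ∀ A ∈ famSet k (Finset.univ : Finset (Fin n)) l,
        G A ∈ (Finset.piAntidiag (Finset.univ : Finset (Fin n)) k).filter
          (fun c => typeOf n k c = l) := by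
      intro A hA
      obtain ⟨hA1, hAc, hAd⟩ := mem_famSet.mp hA
      have hGsum : ∑ j, G A j = k := by
        simp only [hG]
        rw [Finset.sum_comm]
        calc ∑ i : Fin k, ∑ j : Fin n, (i.1 + 1) * (if j ∈ A i then 1 else 0)
            = ∑ i : Fin k, (i.1 + 1) * (A i).card := by
              refine Finset.sum_congr rfl fun i _ => ?_
              rw [← Finset.mul_sum, hcardfun A i]
          _ = ∑ i : Fin k, (i.1 + 1) * l i :=
              Finset.sum_congr rfl fun i _ => by rw [hAc i]
          _ = k := hlsum
      refine Finset.mem_filter.mpr ⟨Finset.mem_piAntidiag.mpr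
        ⟨hGsum, fun i _ => Finset.mem_univ i⟩, ?_⟩
      funext i
      rw [typeOf, hfilterA A hA i, hAc i]
    have hleft : ∀ c ∈ (Finset.piAntidiag (Finset.univ : Finset (Fin n)) k).filter
        (fun c => typeOf n k c = l), G (F c) = c := by
      intro c hcmem
      obtain ⟨hc1, -⟩ := Finset.mem_filter.mp hcmem
      have hck := mem_piAntidiag_le hc1
      funext j
      by_cases h0 : c j = 0
      · rw [hval0]
        · exact h0.symm
        · intro i
          simp only [hF, Finset.mem_filter]
          rintro ⟨-, hji⟩
          omega
      · obtain ⟨v, hv⟩ : ∃ v, c j = v + 1 := ⟨c j - 1, by omega⟩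
        have hvk : v < k := by have := hck j; omega
        rw [hval _ ?_ j ⟨v, hvk⟩ ?_]
        · exact hv.symm
        · intro i i' hne x hx hx'
          simp only [hF, Finset.mem_filter] at hx hx'
          exact hne (Fin.ext (by omega))
        · simp only [hF, Finset.mem_filter, Finset.mem_univ, true_and]
          exact hv
    have hright : ∀ A ∈ famSet k (Finset.univ : Finset (Fin n)) l, F (G A) = A := by
      intro A hA
      funext i
      exact hfilterA A hA i
    exact Finset.card_nbij' F G hFmaps hGmaps hleft hright
  rw [hbij]
  have := famSet_card k (Finset.univ : Finset (Fin n)) l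
    (by rw [Finset.card_univ, Fintype.card_fin]; exact hmn)
  rw [Finset.card_univ, Fintype.card_fin] at this
  exact this

lemma desc_lower (n : ℕ) (hn : 1 ≤ n) :
    ∀ m : ℕ, m ≤ n →
      (n:ℝ)^m * (2*n - ((m:ℝ)^2 - m)) ≤ 2*n * (Nat.descFactorial n m) := by
  intro m
  induction m with
  | zero => intro _; simp
  | succ m ih =>
    intro hm
    have hm' : m ≤ n := Nat.le_of_succ_le hm
    have ihm := ih hm'
    have hmr : (m:ℝ) ≤ n := Nat.cast_le.mpr hm'
    have hnm : (0:ℝ) ≤ (n:ℝ) - m := by linarith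
    have hdesc : (Nat.descFactorial n (m+1) : ℝ) = ((n:ℝ) - m) * (Nat.descFactorial n m : ℝ) := by
      rw [Nat.descFactorial_succ]
      push_cast [Nat.cast_sub hm']
      ring
    have hpow : (0:ℝ) ≤ (n:ℝ)^m := by positivity
    have hd : (0:ℝ) ≤ (Nat.descFactorial n m : ℝ) := Nat.cast_nonneg _
    have hm1 : (0:ℝ) ≤ (m:ℝ)^2 * ((m:ℝ) - 1) := by
      rcases Nat.eq_zero_or_pos m with h | h
      · simp [h]
      · have h1 : (1:ℝ) ≤ m := by exact_mod_cast h
        nlinarith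
    have key := mul_le_mul_of_nonneg_left ihm hnm
    rw [hdesc]
    push_cast
    rw [pow_succ]
    nlinarith [mul_nonneg hpow hm1]

lemma per_l_core (n k : ℕ) (hn : 1 ≤ n) (hkn : k ≤ n)
    {l : Fin k → ℕ} (hl : l ∈ bellTuples k) :
    (1 - (k:ℝ)^2/(2*n)) / (∏ i, (Nat.factorial (l i) : ℝ)) ≤
        (((Finset.piAntidiag (Finset.univ : Finset (Fin n)) k).filter
          (fun c => typeOf n k c = l)).card : ℝ) / (n:ℝ)^(∑ i, l i) ∧
      (((Finset.piAntidiag (Finset.univ : Finset (Fin n)) k).filter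
          (fun c => typeOf n k c = l)).card : ℝ) / (n:ℝ)^(∑ i, l i) ≤
        1 / (∏ i, (Nat.factorial (l i) : ℝ)) := by
  obtain ⟨-, hlsum⟩ := Finset.mem_filter.mp hl
  have hmk : ∑ i, l i ≤ k := by
    have h2 : ∑ i, l i ≤ ∑ i : Fin k, (i.1 + 1) * l i :=
      Finset.sum_le_sum fun i _ => Nat.le_mul_of_pos_left _ (Nat.succ_pos _)
    exact le_trans h2 (le_of_eq hlsum)
  have hmn : ∑ i, l i ≤ n := le_trans hmk hkn
  set m := ∑ i, l i with hm
  set cardl := ((Finset.piAntidiag (Finset.univ : Finset (Fin n)) k).filter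
      (fun c => typeOf n k c = l)).card with hcardl
  set L := ∏ i, Nat.factorial (l i) with hLdef
  have hcount : cardl * (L * Nat.factorial (n - m)) = Nat.factorial n := fiber_card hkn hl
  have hdescfac : Nat.factorial (n - m) * Nat.descFactorial n m = Nat.factorial n :=
    Nat.factorial_mul_descFactorial hmn
  have hcl : cardl * L = Nat.descFactorial n m := by
    have h1 : (cardl * L) * Nat.factorial (n - m) =
        Nat.descFactorial n m * Nat.factorial (n - m) := by
      rw [mul_assoc, hcount, mul_comm, hdescfac]
    exact Nat.eq_of_mul_eq_mul_right (Nat.factorial_pos _) h1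
  have hLpos : 0 < L := Finset.prod_pos fun i _ => Nat.factorial_pos _
  have hLr : (0:ℝ) < (L:ℝ) := by exact_mod_cast hLpos
  have hnr : (0:ℝ) < (n:ℝ) := by exact_mod_cast Nat.lt_of_lt_of_le Nat.zero_lt_one hn
  have hnm : (0:ℝ) < (n:ℝ)^m := by positivity
  have hcast : (cardl:ℝ) * (L:ℝ) = (Nat.descFactorial n m : ℝ) := by exact_mod_cast hcl
  have hcastL : (∏ i, (Nat.factorial (l i) : ℝ)) = (L:ℝ) := by
    rw [hLdef]; push_cast; rfl
  rw [hcastL]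
  constructor
  · rw [div_le_div_iff₀ (by positivity) hnm]
    have hdl := desc_lower n hn m hmn
    have hmkr : (m:ℝ) ≤ k := by exact_mod_cast hmk
    have hmr : (0:ℝ) ≤ m := Nat.cast_nonneg _
    have e1 : (n:ℝ)^m * (2*n - (k:ℝ)^2) ≤ 2*n * (Nat.descFactorial n m) := by
      have : (2*(n:ℝ) - (k:ℝ)^2) ≤ (2*n - ((m:ℝ)^2 - m)) := by nlinarith
      nlinarith [hnm.le]
    have : (1 - (k:ℝ)^2/(2*n)) * (n:ℝ)^m = ((n:ℝ)^m * (2*n - (k:ℝ)^2))/(2*n) := by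
      field_simp
    rw [this, div_le_iff₀ (by positivity)]
    calc (n:ℝ)^m * (2*n - (k:ℝ)^2) ≤ 2*n * (Nat.descFactorial n m) := e1
      _ = (cardl:ℝ) * (L:ℝ) * (2*n) := by rw [hcast]; ring
  · rw [div_le_div_iff₀ hnm hLr, one_mul]
    have hdu : (Nat.descFactorial n m : ℝ) ≤ (n:ℝ)^m := by
      exact_mod_cast Nat.descFactorial_le_pow n m
    rw [hcast]; exact hdu

/-- Lemma 1.1, non-asymptotic form: for i.i.d. Bernoulli(λ/n) variables
`a_1, …, a_n` and i.i.d. weights `W_1, …, W_n` (independent of the `a`'s) with moments `V_i`,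
the `k`-th moment of `∑ a_j W_j` is squeezed between `(1 - k²/(2n)) M_k(λ)` and `M_k(λ)`. -/
theorem stmt0
    {Ω : Type*} [MeasurableSpace Ω] (μ : Measure Ω) [IsProbabilityMeasure μ]
    (n : ℕ) (hn : 1 ≤ n) (lam : ℝ) (hlam : 0 < lam) (hlamn : lam ≤ n)
    (a W : Fin n → Ω → ℝ) (V : ℕ → ℝ)
    (hVpos : ∀ i : ℕ, 1 ≤ i → 0 ≤ V i)
    (hameas : ∀ j, Measurable (a j)) (hWmeas : ∀ j, Measurable (W j))
    (ha01 : ∀ j ω, a j ω = 0 ∨ a j ω = 1)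
    (haP : ∀ j, μ {ω | a j ω = 1} = ENNReal.ofReal (lam / n))
    (hindep : ProbabilityTheory.iIndepFun
      (Sum.elim a W) μ)
    (hident : ∀ j j', ProbabilityTheory.IdentDistrib (W j) (W j') μ μ)
    (hWint : ∀ j, ∀ i : ℕ, 1 ≤ i → Integrable (fun ω => |W j ω| ^ i) μ)
    (hWmom : ∀ j, ∀ i : ℕ, 1 ≤ i → ∫ ω, (W j ω) ^ i ∂μ = V i)
    (k : ℕ) (hk : 1 ≤ k) (hkn : k ≤ n) :
    (1 - (k : ℝ) ^ 2 / (2 * n)) * weightedBell V k lam ≤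
        ∫ ω, (∑ j, a j ω * W j ω) ^ k ∂μ ∧
      ∫ ω, (∑ j, a j ω * W j ω) ^ k ∂μ ≤ weightedBell V k lam := by
  classical
  have hEq := moment_formula μ n hn lam hlam a W V hameas hWmeas ha01 haP hindep hWint hWmom k
  have hmaps : ∀ c ∈ Finset.piAntidiag (Finset.univ : Finset (Fin n)) k,
      typeOf n k c ∈ bellTuples k := fun c hc => typeOf_mem_bellTuples hc
  have hnr : (0:ℝ) < n := by exact_mod_cast Nat.lt_of_lt_of_le Nat.zero_lt_one hn
  have hQnn : ∀ l : Fin k → ℕ, 0 ≤ ∏ i : Fin k, (lam * V (i.1+1)) ^ (l i) := fun l =>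
    Finset.prod_nonneg fun i _ =>
      pow_nonneg (mul_nonneg hlam.le (hVpos _ (Nat.le_add_left 1 i.1))) _
  have hFacpos : ∀ l : Fin k → ℕ, 0 < ∏ i : Fin k, ((Nat.factorial (i.1+1) : ℝ)) ^ (l i) :=
    fun l => Finset.prod_pos fun i _ =>
      pow_pos (by exact_mod_cast Nat.factorial_pos (i.1+1)) _
  -- the expectation as a sum over bellTuples
  have hEsum : ∫ ω, (∑ j, a j ω * W j ω) ^ k ∂μ =
      ∑ l ∈ bellTuples k,
        ((((Finset.piAntidiag (Finset.univ : Finset (Fin n)) k).filter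
            (fun c => typeOf n k c = l)).card : ℝ) *
          ((Nat.factorial k : ℝ) / (∏ i : Fin k, ((Nat.factorial (i.1+1) : ℝ)) ^ (l i)) *
            ∏ i : Fin k, (lam / n * V (i.1+1)) ^ (l i))) := by
    rw [hEq, ← Finset.sum_fiberwise_of_maps_to hmaps]
    refine Finset.sum_congr rfl fun l hl => ?_
    have hconst : ∀ c ∈ (Finset.piAntidiag (Finset.univ : Finset (Fin n)) k).filter
        (fun c => typeOf n k c = l),
        (Nat.multinomial Finset.univ c : ℝ) *
          ∏ j, (if c j = 0 then (1:ℝ) else lam / n * V (c j)) =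
        (Nat.factorial k : ℝ) / (∏ i : Fin k, ((Nat.factorial (i.1+1) : ℝ)) ^ (l i)) *
          ∏ i : Fin k, (lam / n * V (i.1+1)) ^ (l i) := by
      intro c hcmem
      obtain ⟨hc1, htc⟩ := Finset.mem_filter.mp hcmem
      have hck := mem_piAntidiag_le hc1
      obtain ⟨hsumc, -⟩ := Finset.mem_piAntidiag.mp hc1
      have hfacprod : (∏ j, ((Nat.factorial (c j) : ℝ))) =
          ∏ i : Fin k, ((Nat.factorial (i.1+1) : ℝ)) ^ (l i) := by
        rw [prod_by_type (fun v => ((Nat.factorial v : ℝ))) (by simp) n k c hck, htc]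
      have hmult : (Nat.multinomial Finset.univ c : ℝ) =
          (Nat.factorial k : ℝ) / (∏ i : Fin k, ((Nat.factorial (i.1+1) : ℝ)) ^ (l i)) := by
        have hspec := Nat.multinomial_spec Finset.univ c
        rw [hsumc] at hspec
        have hspec' : (∏ j, (Nat.factorial (c j) : ℝ)) * (Nat.multinomial Finset.univ c : ℝ)
            = (Nat.factorial k : ℝ) := by exact_mod_cast hspec
        rw [hfacprod] at hspec'
        rw [eq_div_iff (hFacpos l).ne']
        linarith [hspec']
      have hprodh : (∏ j, (if c j = 0 then (1:ℝ) else lam / n * V (c j))) =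
          ∏ i : Fin k, (lam / n * V (i.1+1)) ^ (l i) := by
        rw [prod_by_type (fun v => if v = 0 then (1:ℝ) else lam / n * V v)
          (by simp) n k c hck, htc]
        exact Finset.prod_congr rfl fun i _ => by simp
      rw [hmult, hprodh]
    rw [Finset.sum_congr rfl hconst, Finset.sum_const, nsmul_eq_mul]
  have hWB : weightedBell V k lam = ∑ l ∈ bellTuples k, (Nat.factorial k : ℝ) *
      ∏ i : Fin k, (lam * V (i.1 + 1)) ^ (l i) /
        ((Nat.factorial (i.1 + 1) : ℝ) ^ (l i) * (Nat.factorial (l i) : ℝ)) := by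
    rw [weightedBell, Finset.mul_sum]
  -- termwise bounds
  have hterm : ∀ l ∈ bellTuples k,
      (1 - (k:ℝ)^2/(2*n)) * ((Nat.factorial k : ℝ) *
          ∏ i : Fin k, (lam * V (i.1 + 1)) ^ (l i) /
            ((Nat.factorial (i.1 + 1) : ℝ) ^ (l i) * (Nat.factorial (l i) : ℝ))) ≤
        ((((Finset.piAntidiag (Finset.univ : Finset (Fin n)) k).filter
            (fun c => typeOf n k c = l)).card : ℝ) *
          ((Nat.factorial k : ℝ) / (∏ i : Fin k, ((Nat.factorial (i.1+1) : ℝ)) ^ (l i)) *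
            ∏ i : Fin k, (lam / n * V (i.1+1)) ^ (l i))) ∧
      ((((Finset.piAntidiag (Finset.univ : Finset (Fin n)) k).filter
            (fun c => typeOf n k c = l)).card : ℝ) *
          ((Nat.factorial k : ℝ) / (∏ i : Fin k, ((Nat.factorial (i.1+1) : ℝ)) ^ (l i)) *
            ∏ i : Fin k, (lam / n * V (i.1+1)) ^ (l i))) ≤
        (Nat.factorial k : ℝ) * ∏ i : Fin k, (lam * V (i.1 + 1)) ^ (l i) /
            ((Nat.factorial (i.1 + 1) : ℝ) ^ (l i) * (Nat.factorial (l i) : ℝ)) := by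
    intro l hl
    have hcore := per_l_core n k hn hkn hl
    have hLpos : (0:ℝ) < ∏ i : Fin k, (Nat.factorial (l i) : ℝ) :=
      Finset.prod_pos fun i _ => by exact_mod_cast Nat.factorial_pos (l i)
    have hC : 0 ≤ (Nat.factorial k : ℝ) * (∏ i : Fin k, (lam * V (i.1+1)) ^ (l i)) /
        (∏ i : Fin k, ((Nat.factorial (i.1+1) : ℝ)) ^ (l i)) :=
      div_nonneg (mul_nonneg (Nat.cast_nonneg _) (hQnn l)) (hFacpos l).le
    have hMeq : (Nat.factorial k : ℝ) * ∏ i : Fin k, (lam * V (i.1 + 1)) ^ (l i) /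
          ((Nat.factorial (i.1 + 1) : ℝ) ^ (l i) * (Nat.factorial (l i) : ℝ)) =
        ((Nat.factorial k : ℝ) * (∏ i : Fin k, (lam * V (i.1+1)) ^ (l i)) /
          (∏ i : Fin k, ((Nat.factorial (i.1+1) : ℝ)) ^ (l i))) *
          (1 / (∏ i : Fin k, (Nat.factorial (l i) : ℝ))) := by
      rw [Finset.prod_div_distrib, Finset.prod_mul_distrib]
      field_simp
    have hp : (∏ i : Fin k, (lam / n * V (i.1+1)) ^ (l i)) =
        (∏ i : Fin k, (lam * V (i.1+1)) ^ (l i)) / (n:ℝ)^(∑ i, l i) := by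
      rw [← Finset.prod_pow_eq_pow_sum, ← Finset.prod_div_distrib]
      refine Finset.prod_congr rfl fun i _ => ?_
      rw [← div_pow, div_mul_eq_mul_div]
    have hEeq : ((((Finset.piAntidiag (Finset.univ : Finset (Fin n)) k).filter
            (fun c => typeOf n k c = l)).card : ℝ) *
          ((Nat.factorial k : ℝ) / (∏ i : Fin k, ((Nat.factorial (i.1+1) : ℝ)) ^ (l i)) *
            ∏ i : Fin k, (lam / n * V (i.1+1)) ^ (l i))) =
        ((Nat.factorial k : ℝ) * (∏ i : Fin k, (lam * V (i.1+1)) ^ (l i)) /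
          (∏ i : Fin k, ((Nat.factorial (i.1+1) : ℝ)) ^ (l i))) *
          ((((Finset.piAntidiag (Finset.univ : Finset (Fin n)) k).filter
            (fun c => typeOf n k c = l)).card : ℝ) / (n:ℝ)^(∑ i, l i)) := by
      rw [hp]; ring
    constructor
    · rw [hMeq, hEeq]
      calc (1 - (k:ℝ)^2/(2*n)) * (((Nat.factorial k : ℝ) *
              (∏ i : Fin k, (lam * V (i.1+1)) ^ (l i)) /
              (∏ i : Fin k, ((Nat.factorial (i.1+1) : ℝ)) ^ (l i))) *
              (1 / (∏ i : Fin k, (Nat.factorial (l i) : ℝ)))) =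
            ((Nat.factorial k : ℝ) * (∏ i : Fin k, (lam * V (i.1+1)) ^ (l i)) /
              (∏ i : Fin k, ((Nat.factorial (i.1+1) : ℝ)) ^ (l i))) *
              ((1 - (k:ℝ)^2/(2*n)) / (∏ i : Fin k, (Nat.factorial (l i) : ℝ))) := by
            ring
        _ ≤ _ := mul_le_mul_of_nonneg_left hcore.1 hC
    · rw [hMeq, hEeq]
      exact mul_le_mul_of_nonneg_left hcore.2 hC
  constructor
  · rw [hEsum, hWB, Finset.mul_sum]
    exact Finset.sum_le_sum fun l hl => (hterm l hl).1
  · rw [hEsum, hWB]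
    exact Finset.sum_le_sum fun l hl => (hterm l hl).2

end
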